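/- Uniqueness of highest weight element in type C: if x = (x₁,…,x_k,0,…) ∈ R(λ) (characterized by conditions (1)-(4) of the C_n characterization theorem) satisfies ẽ_l x = 0 for all l ∈ I, then x = r_λ. -/

import Mathlib

attribute [local instance] Classical.propDecidable

noncomputable section

namespace CrystalSeq

/-- an element of `𝓡^∞`: the (finite) list of its non-zero components, each component
recorded together with its superscript `i` (so `(i, L)` stands for an element of `⋃ₛ R^i_s`). -/
abbrev RSeq := List (ℤ × List (ℤ × ℤ))

def firsts (L : List (ℤ × ℤ)) : List ℤ := L.map Prod.fst
def seconds (L : List (ℤ × ℤ)) : List ℤ := L.map Prod.snd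

/-- `L ∈ ⋃ₛ R^i_s`.  Entries are encoded as integers: `v` with `1 ≤ v ≤ n` is the letter `v`,
and (in type `C`) `v` with `n < v ≤ 2n-1` is the barred letter `bar (2n - v)`, so that the
bar map is `v ↦ 2n - v` and `max I = 2n - 1`.  The flag is `t = true` for type `Cₙ` and
`t = false` for type `Aₙ` (where `max I = n` and there are no barred letters).
The conditions are `1 ≤ i_s < ⋯ < i₁ ≤ i ≤ i₁' < ⋯ < i_s' ≤ max I` and `i_j' ≤ bar i_j`. -/
def InR (t : Bool) (n : ℕ) (i : ℤ) (L : List (ℤ × ℤ)) : Prop :=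
  List.Chain' (fun p q => q.1 < p.1 ∧ p.2 < q.2) L ∧
  ∀ p ∈ L, 1 ≤ p.1 ∧ p.1 ≤ i ∧ i ≤ p.2 ∧
    p.2 ≤ (if t then 2 * (n : ℤ) - 1 else (n : ℤ)) ∧
    (t = true → p.2 ≤ 2 * (n : ℤ) - p.1)

/-- property (a) of Section 3 -/
def condA (t : Bool) (n : ℕ) (i l : ℤ) (L : List (ℤ × ℤ)) : Prop :=
  l ∉ firsts L ∧ l ∉ seconds L ∧
  (l < i → l + 1 ∈ firsts L) ∧ (i < l → l - 1 ∈ seconds L) ∧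
  (t = true → (2 * (n : ℤ) - l - 1 ∈ seconds L ∨ 2 * (n : ℤ) - l ∉ seconds L))

/-- property (a') of Section 3 (only meaningful in type `C`) -/
def condA' (t : Bool) (n : ℕ) (i l : ℤ) (L : List (ℤ × ℤ)) : Prop :=
  t = true ∧ l ∉ firsts L ∧ l ∉ seconds L ∧
  (l < i → l + 1 ∈ firsts L) ∧ (i < l → l - 1 ∈ seconds L) ∧
  (2 * (n : ℤ) - l - 1 ∈ seconds L ∧ 2 * (n : ℤ) - l ∉ seconds L)

/-- property (b) of Section 3 -/
def condB (t : Bool) (n : ℕ) (i l : ℤ) (L : List (ℤ × ℤ)) : Prop :=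
  t = true ∧ 2 * (n : ℤ) - l ∉ seconds L ∧ 2 * (n : ℤ) - l - 1 ∈ seconds L ∧
  (l < i → (l + 1 ∉ firsts L ∨ l ∈ firsts L)) ∧
  (i < l → (l - 1 ∉ seconds L ∨ l ∈ seconds L)) ∧
  (l = i → ∃ p, L.head? = some p ∧ (p.1 = l ∨ p.2 = l))

/-- property (c) of Section 3 -/
def condC (t : Bool) (n : ℕ) (i l : ℤ) (L : List (ℤ × ℤ)) : Prop :=
  (l ∈ firsts L ∨ l ∈ seconds L) ∧
  (l < i → l + 1 ∉ firsts L) ∧ (i < l → l - 1 ∉ seconds L) ∧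
  (l = i → L.head? = some (l, l)) ∧
  (t = true → (2 * (n : ℤ) - l - 1 ∈ seconds L ∨ 2 * (n : ℤ) - l ∉ seconds L))

/-- property (d) of Section 3 (only meaningful in type `C`) -/
def condD (t : Bool) (n : ℕ) (i l : ℤ) (L : List (ℤ × ℤ)) : Prop :=
  t = true ∧ 2 * (n : ℤ) - l ∈ seconds L ∧ 2 * (n : ℤ) - l - 1 ∉ seconds L ∧
  (l < i → (l + 1 ∉ firsts L ∨ l ∈ firsts L)) ∧
  (i < l → (l - 1 ∉ seconds L ∨ l ∈ seconds L)) ∧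
  (l = i → ∃ p, L.head? = some p ∧ (p.1 = l ∨ p.2 = l))

/-- property (d') of Section 3: (d) with every `∨` replaced by `∧` -/
def condD' (t : Bool) (n : ℕ) (i l : ℤ) (L : List (ℤ × ℤ)) : Prop :=
  t = true ∧ 2 * (n : ℤ) - l ∈ seconds L ∧ 2 * (n : ℤ) - l - 1 ∉ seconds L ∧
  (l < i → (l + 1 ∉ firsts L ∧ l ∈ firsts L)) ∧
  (i < l → (l - 1 ∉ seconds L ∧ l ∈ seconds L)) ∧
  (l = i → ∃ p, L.head? = some p ∧ p.1 = l ∧ p.2 = l)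

/-- the raw modification underlying `θ_l` in case (a): replace `l+1` by `l` (if `l < i`),
replace `l-1` by `l` (if `l > i`), or add the pair `(l,l)` (if `l = i`). -/
def thetaRaw (i l : ℤ) (L : List (ℤ × ℤ)) : List (ℤ × ℤ) :=
  if l < i then L.map (fun p => if p.1 = l + 1 then (l, p.2) else p)
  else if i < l then L.map (fun p => if p.2 = l - 1 then (p.1, l) else p)
  else (l, l) :: L

/-- replace `bar (l+1)` by `bar l` (case (b) of `θ_l`) -/
def barUp (n : ℕ) (l : ℤ) (L : List (ℤ × ℤ)) : List (ℤ × ℤ) :=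
  L.map (fun p => if p.2 = 2 * (n : ℤ) - l - 1 then (p.1, 2 * (n : ℤ) - l) else p)

/-- the map `θ_l : ⋃ₛ R^i_s → ⋃ₛ R^i_s ∪ {0}` -/
def theta (t : Bool) (n : ℕ) (i l : ℤ) (L : List (ℤ × ℤ)) : Option (List (ℤ × ℤ)) :=
  if condA t n i l L then some (thetaRaw i l L)
  else if condB t n i l L then some (barUp n l L)
  else none

/-- the raw modification underlying `ρ_l` in case (c): replace `l` by `l+1` (if `l < i`),
replace `l` by `l-1` (if `l > i`), or erase the pair `(l,l)` (if `l = i`). -/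
def rhoRaw (i l : ℤ) (L : List (ℤ × ℤ)) : List (ℤ × ℤ) :=
  if l < i then L.map (fun p => if p.1 = l then (l + 1, p.2) else p)
  else if i < l then L.map (fun p => if p.2 = l then (p.1, l - 1) else p)
  else L.erase (l, l)

/-- replace `bar l` by `bar (l+1)` (case (d) of `ρ_l`) -/
def barDown (n : ℕ) (l : ℤ) (L : List (ℤ × ℤ)) : List (ℤ × ℤ) :=
  L.map (fun p => if p.2 = 2 * (n : ℤ) - l then (p.1, 2 * (n : ℤ) - l - 1) else p)

/-- the map `ρ_l : ⋃ₛ R^i_s → ⋃ₛ R^i_s ∪ {0}` -/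
def rho (t : Bool) (n : ℕ) (i l : ℤ) (L : List (ℤ × ℤ)) : Option (List (ℤ × ℤ)) :=
  if condC t n i l L then some (rhoRaw i l L)
  else if condD t n i l L then some (barDown n l L)
  else none

/-- validity of an element of `𝓡^∞` -/
def ValidR (t : Bool) (n : ℕ) (c : RSeq) : Prop :=
  ∀ q ∈ c, 1 ≤ q.1 ∧ q.1 ≤ (n : ℤ) ∧ InR t n q.1 q.2

/-- `σ^j_l = a^j_l + b^j_l` -/
def sigmaStat (t : Bool) (n : ℕ) (l : ℤ) (c : RSeq) (j : ℕ) : ℕ :=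
  (c.take (j - 1)).countP (fun q => decide (condA t n q.1 l q.2 ∨ condB t n q.1 l q.2)) +
  (c.take (j - 1)).countP (fun q => decide (condA' t n q.1 l q.2))

/-- `τ^j_l = c^j_l + d^j_l` -/
def tauStat (t : Bool) (n : ℕ) (l : ℤ) (c : RSeq) (j : ℕ) : ℕ :=
  ((c.take j).drop 1).countP (fun q => decide (condC t n q.1 l q.2 ∨ condD t n q.1 l q.2)) +
  ((c.take j).drop 1).countP (fun q => decide (condD' t n q.1 l q.2))

/-- `σ^j_l - τ^j_l` -/
def dstat (t : Bool) (n : ℕ) (l : ℤ) (c : RSeq) (j : ℕ) : ℤ :=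
  (sigmaStat t n l c j : ℤ) - (tauStat t n l c j : ℤ)

/-- `min {σ^j_l - τ^j_l | 1 ≤ j ≤ k}` -/
def minStat (t : Bool) (n : ℕ) (l : ℤ) (c : RSeq) : ℤ :=
  ((List.range c.length).map (fun j => dstat t n l c (j + 1))).foldr min (dstat t n l c 1)

/-- `f_l(x)`: the largest position attaining the minimum of `σ^j_l - τ^j_l` -/
def fpos (t : Bool) (n : ℕ) (l : ℤ) (c : RSeq) : ℕ :=
  sSup {p : ℕ | 1 ≤ p ∧ p ≤ c.length ∧ dstat t n l c p = minStat t n l c}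

/-- `e_l(x)`: the smallest position attaining the minimum of `σ^j_l - τ^j_l` -/
def epos (t : Bool) (n : ℕ) (l : ℤ) (c : RSeq) : ℕ :=
  sInf {p : ℕ | 1 ≤ p ∧ p ≤ c.length ∧ dstat t n l c p = minStat t n l c}

/-- the Kashiwara operator `f̃_l` on `𝓡^∞`: apply `θ_l` at position `f_l(x)` -/
def ftil (t : Bool) (n : ℕ) (l : ℤ) (c : RSeq) : Option RSeq :=
  (getElem? c (fpos t n l c - 1)).bind
    (fun q => (theta t n q.1 l q.2).map (fun y => c.set (fpos t n l c - 1) (q.1, y)))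

/-- the Kashiwara operator `ẽ_l` on `𝓡^∞`: apply `ρ_l` at position `e_l(x)` -/
def etil (t : Bool) (n : ℕ) (l : ℤ) (c : RSeq) : Option RSeq :=
  (getElem? c (epos t n l c - 1)).bind
    (fun q => (rho t n q.1 l q.2).map (fun y => c.set (epos t n l c - 1) (q.1, y)))

/-- the Cartan matrix entry `⟨α_a^∨, α_b⟩` of type `Aₙ` (`t = false`) or `Cₙ` (`t = true`) -/
def cartan (t : Bool) (n : ℕ) (a b : ℤ) : ℤ :=
  if a = b then 2
  else if b = a + 1 then (if t = true ∧ b = (n : ℤ) then -2 else -1)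
  else if b = a - 1 then -1 else 0

/-- the coefficient of `ω_m` in the positive root `α_{a,b}` (here `b > n` encodes the
barred letter `bar (2n - b)`, so `α_{a, bar j} = α_a + ⋯ + α_n + α_{n-1} + ⋯ + α_j`). -/
def rootCoeff (t : Bool) (n : ℕ) (a b m : ℤ) : ℤ :=
  (∑ x ∈ Finset.Icc a (min b (n : ℤ)), cartan t n m x) +
  (if (n : ℤ) < b then ∑ x ∈ Finset.Icc (2 * (n : ℤ) - b) ((n : ℤ) - 1), cartan t n m x else 0)

/-- the coefficient of `ω_m` in the weight of a component `(i, L)`: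
`ω_i - ∑_j α_{i_j, i_j'}` -/
def wtComp (t : Bool) (n : ℕ) (q : ℤ × List (ℤ × ℤ)) (m : ℤ) : ℤ :=
  (if m = q.1 then 1 else 0) - ((q.2.map (fun p => rootCoeff t n p.1 p.2 m)).sum)

/-- the coefficient of `ω_m` in `wt(x)` for `x ∈ 𝓡^∞` -/
def wtR (t : Bool) (n : ℕ) (c : RSeq) (m : ℤ) : ℤ :=
  (c.map (fun q => wtComp t n q m)).sum

/-- `ε_l(x) = τ²_l((∅₁, x_{q₁}, 0, …)) - min_j (σ^j_l - τ^j_l)` -/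
def epsStat (t : Bool) (n : ℕ) (l : ℤ) (c : RSeq) : ℤ :=
  (tauStat t n l (((1 : ℤ), ([] : List (ℤ × ℤ))) :: c) 2 : ℤ) - minStat t n l c

/-- `φ_l(x) = σ^{k+1}_l(x) - τ^k_l(x) - min_j (σ^j_l - τ^j_l)` -/
def phiStat (t : Bool) (n : ℕ) (l : ℤ) (c : RSeq) : ℤ :=
  (sigmaStat t n l c (c.length + 1) : ℤ) - (tauStat t n l c c.length : ℤ) - minStat t n l c

/-- iterates of `ẽ_l` -/
def eIter (t : Bool) (n : ℕ) (l : ℤ) (k : ℕ) (c : RSeq) : Option RSeq :=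
  (fun o => o.bind (etil t n l))^[k] (some c)

/-- iterates of `f̃_l` -/
def fIter (t : Bool) (n : ℕ) (l : ℤ) (k : ℕ) (c : RSeq) : Option RSeq :=
  (fun o => o.bind (ftil t n l))^[k] (some c)

/-- one Kashiwara step (in either direction); connected components of `𝓡^∞` are the
equivalence classes of the reflexive-transitive closure of this relation. -/
def KStep (t : Bool) (n : ℕ) (c c' : RSeq) : Prop :=
  ∃ l : ℤ, 1 ≤ l ∧ l ≤ (n : ℤ) ∧ (ftil t n l c = some c' ∨ etil t n l c = some c')

/-- the list `1^{m_1} 2^{m_2} ⋯ n^{m_n}` of superscripts of `r_λ` for `λ = ∑ m_i ω_i` -/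
def typeList (n : ℕ) (m : ℤ → ℕ) : List ℤ :=
  (List.range n).flatMap (fun a => List.replicate (m ((a : ℤ) + 1)) ((a : ℤ) + 1))

/-- the highest weight element `r_λ = (∅₁^{m₁}, …, ∅ₙ^{mₙ}, 0, …)` -/
def rlam (n : ℕ) (m : ℤ → ℕ) : RSeq := (typeList n m).map (fun i => (i, []))

/-- `𝓡(λ)`: the connected component of `𝓡^∞` containing `r_λ` -/
def Rlam (t : Bool) (n : ℕ) (m : ℤ → ℕ) (c : RSeq) : Prop :=
  Relation.ReflTransGen (KStep t n) (rlam n m) c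

/-- the `k`-th first entry `i_k` (1-based), as an `Option` -/
def fIdx (L : List (ℤ × ℤ)) (k : ℤ) : Option ℤ :=
  if 1 ≤ k then (L[k.toNat - 1]?).map Prod.fst else none

/-- the `k`-th second entry `i'_k` (1-based), as an `Option` -/
def sIdx (L : List (ℤ × ℤ)) (k : ℤ) : Option ℤ :=
  if 1 ≤ k then (L[k.toNat - 1]?).map Prod.snd else none

/-- conditions (1) i)–iii) on an adjacent pair `(x_q, x_{q+1})`,
`x_q = (i₁,i₁')⋯(i_s,i_s') ∈ R^i_s`, `x_{q+1} = (j₁,j₁')⋯(j_t,j_t') ∈ R^j_t`. -/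
def cond1 (i : ℤ) (L1 : List (ℤ × ℤ)) (j : ℤ) (L2 : List (ℤ × ℤ)) : Prop :=
  -- i) `#{i_k | 1 ≤ i_k ≤ j_{t-p}} ≥ p+1` for `0 ≤ p ≤ u = max{0 ≤ r ≤ t-1 | j_{t-r} ≤ i}`
  (∀ p : ℕ, (p : ℤ) ≤ (L2.length : ℤ) - 1 →
    ∀ jv, fIdx L2 ((L2.length : ℤ) - p) = some jv → jv ≤ i →
      ((p : ℤ) + 1 ≤ (L1.countP (fun q => decide (1 ≤ q.1 ∧ q.1 ≤ jv)) : ℤ))) ∧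
  -- ii) `j_{t-p} ≤ i'_{j_{t-p} - p + s - i}` for `p ∈ {u+1 ≤ r ≤ t-1 | j_{t-r} ≤ r + i}`
  (∀ p : ℕ, (p : ℤ) ≤ (L2.length : ℤ) - 1 →
    ∀ jv, fIdx L2 ((L2.length : ℤ) - p) = some jv → i < jv → jv ≤ (p : ℤ) + i →
      ∃ v, sIdx L1 (jv - p + L1.length - i) = some v ∧ jv ≤ v) ∧
  -- iii) `j'_p ≤ i'_{j - i + s - t + p}` for `1 ≤ p ≤ i - j + t`
  (∀ p : ℕ, 1 ≤ p → (p : ℤ) ≤ i - j + L2.length →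
    ∀ jv, sIdx L2 p = some jv →
      ∃ v, sIdx L1 (j - i + L1.length - L2.length + p) = some v ∧ jv ≤ v)

/-- condition (2): there is no pair `(∅_i, x_{q+1} ≠ ∅_j)` with `i ≥ j_t` -/
def cond2 (i : ℤ) (L1 : List (ℤ × ℤ)) (L2 : List (ℤ × ℤ)) : Prop :=
  L1 = [] → ∀ p, L2.getLast? = some p → i < p.1

/-- an adjacent pair satisfying the type `A` conditions (1) and (2) -/
def pairOkA (i : ℤ) (L1 : List (ℤ × ℤ)) (j : ℤ) (L2 : List (ℤ × ℤ)) : Prop :=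
  (L1 ≠ [] → L2 ≠ [] → cond1 i L1 j L2) ∧ cond2 i L1 L2

/-- the exclusion condition `bar v - δ ∉ (1-δ)·{firsts} ∪ δ·(I ∖ {seconds})`
of conditions (3)(a),(b) and (4)(a),(b), where `δ = δ_{bar v ∈ {i+1,…,n}}`. -/
def excl (n : ℕ) (i : ℤ) (L : List (ℤ × ℤ)) (v : ℤ) : Prop :=
  ((i < 2 * (n : ℤ) - v ∧ 2 * (n : ℤ) - v ≤ (n : ℤ)) →
    ((1 ≤ 2 * (n : ℤ) - v - 1 ∧ 2 * (n : ℤ) - v - 1 ≤ 2 * (n : ℤ) - 1) →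
      2 * (n : ℤ) - v - 1 ∈ seconds L)) ∧
  (¬(i < 2 * (n : ℤ) - v ∧ 2 * (n : ℤ) - v ≤ (n : ℤ)) → 2 * (n : ℤ) - v ∉ firsts L)

/-- the forbidden configuration of condition (3) of Theorem `char2` -/
def cond3 (n : ℕ) (i : ℤ) (L1 : List (ℤ × ℤ)) (j : ℤ) (L2 : List (ℤ × ℤ)) : Prop :=
  ∃ p r : ℕ, 1 ≤ r ∧ r ≤ p ∧ p ≤ L1.length ∧
    ∃ vp vr : ℤ, sIdx L1 (p : ℤ) = some vp ∧ sIdx L1 (r : ℤ) = some vr ∧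
      (n : ℤ) ≤ vr ∧ vr ≤ vp ∧
      excl n i L1 vr ∧ excl n j L2 vp ∧
      ((p : ℤ) - (r : ℤ)
        + (L2.countP (fun q => decide (q.1 < 2 * (n : ℤ) - vp)) : ℤ)
        - (L1.countP (fun q => decide (q.1 < 2 * (n : ℤ) - vr)) : ℤ)
        + (L1.countP (fun q => decide (q.2 < 2 * (n : ℤ) - vr)) : ℤ)
        - (L2.countP (fun q => decide (q.2 < 2 * (n : ℤ) - vp)) : ℤ)
        ≥ max 0 (2 * (n : ℤ) - vr - i) - max 0 (2 * (n : ℤ) - vp - j))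

/-- the forbidden configuration of condition (4) of Theorem `char2` -/
def cond4 (n : ℕ) (i : ℤ) (L1 : List (ℤ × ℤ)) (j : ℤ) (L2 : List (ℤ × ℤ)) : Prop :=
  ∃ p r : ℕ, 1 ≤ p ∧ p ≤ L1.length ∧ 1 ≤ r ∧ r ≤ L2.length ∧
    ∃ vp vr : ℤ, sIdx L1 (p : ℤ) = some vp ∧ sIdx L2 (r : ℤ) = some vr ∧
      (n : ℤ) ≤ vr ∧ vr ≤ vp ∧
      excl n j L2 vp ∧ excl n j L2 vr ∧
      ((i - j) + ((L2.length : ℤ) - (L1.length : ℤ)) + ((p : ℤ) - (r : ℤ))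
        + (L2.countP (fun q => decide (2 * (n : ℤ) - vp ≤ q.2 ∧ q.2 < 2 * (n : ℤ) - vr)) : ℤ)
        - (L2.countP (fun q => decide (2 * (n : ℤ) - vp ≤ q.1 ∧ q.1 < 2 * (n : ℤ) - vr)) : ℤ)
        ≥ max 0 (2 * (n : ℤ) - vr - j) - max 0 (2 * (n : ℤ) - vp - j))

/-- an adjacent pair satisfying the type `C` conditions (1)–(4) -/
def pairOkC (n : ℕ) (i : ℤ) (L1 : List (ℤ × ℤ)) (j : ℤ) (L2 : List (ℤ × ℤ)) : Prop :=
  pairOkA i L1 j L2 ∧ (L1 ≠ [] → ¬ cond3 n i L1 j L2) ∧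
  (L1 ≠ [] → L2 ≠ [] → ¬ cond4 n i L1 j L2)

/-- the explicit description of `𝓡(λ)` in type `Aₙ` (Theorem `char`) -/
def MemA (n : ℕ) (m : ℤ → ℕ) (c : RSeq) : Prop :=
  c.map Prod.fst = typeList n m ∧ ValidR false n c ∧
  List.Chain' (fun a b => pairOkA a.1 a.2 b.1 b.2) c

/-- the explicit description of `𝓡(λ)` in type `Cₙ` (Theorem `char2`) -/
def MemC (n : ℕ) (m : ℤ → ℕ) (c : RSeq) : Prop :=
  c.map Prod.fst = typeList n m ∧ ValidR true n c ∧
  List.Chain' (fun a b => pairOkC n a.1 a.2 b.1 b.2) c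

/-- `f̃_l` on a single component -/
def fC (t : Bool) (n : ℕ) (l : ℤ) (q : ℤ × List (ℤ × ℤ)) : Option (ℤ × List (ℤ × ℤ)) :=
  (theta t n q.1 l q.2).map (fun y => (q.1, y))

/-- `ẽ_l` on a single component -/
def eC (t : Bool) (n : ℕ) (l : ℤ) (q : ℤ × List (ℤ × ℤ)) : Option (ℤ × List (ℤ × ℤ)) :=
  (rho t n q.1 l q.2).map (fun y => (q.1, y))

/-- `f̃_l` on a tensor product `𝓡' ⊗ (single component)` (tensor product rule) -/
def tensF (t : Bool) (n : ℕ) (l : ℤ) (b : RSeq × (ℤ × List (ℤ × ℤ))) :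
    Option (RSeq × (ℤ × List (ℤ × ℤ))) :=
  if epsStat t n l [b.2] < phiStat t n l b.1 then (ftil t n l b.1).map (fun y => (y, b.2))
  else (fC t n l b.2).map (fun y => (b.1, y))

/-- `ẽ_l` on a tensor product `𝓡' ⊗ (single component)` (tensor product rule) -/
def tensE (t : Bool) (n : ℕ) (l : ℤ) (b : RSeq × (ℤ × List (ℤ × ℤ))) :
    Option (RSeq × (ℤ × List (ℤ × ℤ))) :=
  if epsStat t n l [b.2] ≤ phiStat t n l b.1 then (etil t n l b.1).map (fun y => (y, b.2))
  else (eC t n l b.2).map (fun y => (b.1, y))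

/-- `φ_l` of the tensor product -/
def tensPhi (t : Bool) (n : ℕ) (l : ℤ) (b : RSeq × (ℤ × List (ℤ × ℤ))) : ℤ :=
  max (phiStat t n l [b.2]) (phiStat t n l b.1 + phiStat t n l [b.2] - epsStat t n l [b.2])

/-- `ε_l` of the tensor product -/
def tensEps (t : Bool) (n : ℕ) (l : ℤ) (b : RSeq × (ℤ × List (ℤ × ℤ))) : ℤ :=
  max (epsStat t n l b.1) (epsStat t n l b.1 + epsStat t n l [b.2] - phiStat t n l b.1)

/-- the map `η : 𝓡(ω_i) → 𝓡(ω_{i-1}) ⊗ 𝓡(ω_1)` of Theorem 6.1 (type `Cₙ`) -/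
def eta (i : ℤ) (L : List (ℤ × ℤ)) : List (ℤ × ℤ) × List (ℤ × ℤ) :=
  match L with
  | [] => ([], [(1, i - 1)])
  | (a, b) :: rest =>
      ((if a = i then [] else [(a, i - 1)]) ++ (rest.map Prod.fst).zip (b :: rest.map Prod.snd),
       [(1, (rest.getLastD (a, b)).2)])

/-- `η` viewed as landing in the tensor product of crystals of tuples -/
def etaT (i : ℤ) (L : List (ℤ × ℤ)) : RSeq × (ℤ × List (ℤ × ℤ)) :=
  ([(i - 1, (eta i L).1)], (1, (eta i L).2))

end CrystalSeq


namespace CrystalSeq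

private lemma mem_firsts' {L : List (ℤ × ℤ)} {v : ℤ} (h : v ∈ firsts L) :
    ∃ p ∈ L, p.1 = v := List.mem_map.mp h

private lemma mem_seconds' {L : List (ℤ × ℤ)} {v : ℤ} (h : v ∈ seconds L) :
    ∃ p ∈ L, p.2 = v := List.mem_map.mp h

private lemma chainHead {a : ℤ × ℤ} {T : List (ℤ × ℤ)}
    (h : List.Chain' (fun p q => q.1 < p.1 ∧ p.2 < q.2) (a :: T)) :
    ∀ q ∈ T, q.1 < a.1 ∧ a.2 < q.2 := by
  induction T generalizing a with
  | nil => intro q hq; simp at hq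
  | cons b T ih =>
    have h1 := (List.isChain_cons_cons.mp h).1
    have h2 := (List.isChain_cons_cons.mp h).2
    intro q hq
    rcases List.mem_cons.mp hq with rfl | hq
    · exact h1
    · have := ih h2 q hq
      exact ⟨this.1.trans h1.1, h1.2.trans this.2⟩

private lemma coreCD {n : ℕ} {i l : ℤ} {L : List (ℤ × ℤ)}
    (hF : l ∈ firsts L ∨ l ∈ seconds L)
    (h1 : l < i → l + 1 ∉ firsts L)
    (h2 : i < l → l - 1 ∉ seconds L)
    (h3 : l = i → L.head? = some (l, l)) :
    condC true n i l L ∨ condD true n i l L := by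
  by_cases hb : (2 * (n : ℤ) - l - 1 ∈ seconds L ∨ 2 * (n : ℤ) - l ∉ seconds L)
  · exact Or.inl ⟨hF, h1, h2, h3, fun _ => hb⟩
  · push_neg at hb
    exact Or.inr ⟨rfl, hb.2, hb.1, fun h => Or.inl (h1 h), fun h => Or.inl (h2 h),
      fun h => ⟨(l, l), h3 h, Or.inl rfl⟩⟩

private lemma keyLemma {n : ℕ} {i : ℤ} {L : List (ℤ × ℤ)}
    (hin : i ≤ (n : ℤ)) (hR : InR true n i L) (hL : L ≠ []) :
    ∃ l : ℤ, 1 ≤ l ∧ l ≤ (n : ℤ) ∧ (∀ p ∈ L, p.1 ≤ l) ∧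
      (condC true n i l L ∨ condD true n i l L) := by
  obtain ⟨⟨a, b⟩, T, rfl⟩ : ∃ p T, L = p :: T := by
    cases L with
    | nil => exact absurd rfl hL
    | cons p T => exact ⟨p, T, rfl⟩
  obtain ⟨hch, hbd⟩ := hR
  obtain ⟨ha1, hai, hib, hb2, hba⟩ := hbd (a, b) List.mem_cons_self
  have hba' : b ≤ 2 * (n : ℤ) - a := hba rfl
  have htail := chainHead hch
  have hFmax : ∀ p ∈ (a, b) :: T, p.1 ≤ a := by
    intro p hp
    rcases List.mem_cons.mp hp with rfl | hp
    · exact le_refl _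
    · exact le_of_lt (htail p hp).1
  have hSmin : ∀ p ∈ (a, b) :: T, b ≤ p.2 := by
    intro p hp
    rcases List.mem_cons.mp hp with rfl | hp
    · exact le_refl _
    · exact le_of_lt (htail p hp).2
  have hmemF : a ∈ firsts ((a, b) :: T) := List.mem_map_of_mem List.mem_cons_self
  have hmemS : b ∈ seconds ((a, b) :: T) := List.mem_map_of_mem List.mem_cons_self
  rcases lt_or_eq_of_le hai with hlt | heq
  · -- a < i : take l = a
    refine ⟨a, ha1, le_trans hai hin, hFmax, coreCD (Or.inl hmemF) ?_ ?_ ?_⟩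
    · intro _ hmem
      obtain ⟨p, hp, hp1⟩ := mem_firsts' hmem
      have := hFmax p hp; omega
    · intro h; omega
    · intro h; omega
  · -- a = i
    subst heq
    rcases lt_or_eq_of_le hib with hib' | hbi
    · by_cases hbn : b ≤ (n : ℤ)
      · -- i < b ≤ n : take l = b
        refine ⟨b, by omega, hbn, fun p hp => le_of_lt (lt_of_le_of_lt (hFmax p hp) hib'),
          coreCD (Or.inr hmemS) ?_ ?_ ?_⟩
        · intro h; omega
        · intro _ hmem
          obtain ⟨p, hp, hp2⟩ := mem_seconds' hmem
          have := hSmin p hp; omega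
        · intro h; omega
      · -- b > n : take l = 2n - b, condition (d)
        push_neg at hbn
        refine ⟨2 * (n : ℤ) - b, by omega, by omega,
          fun p hp => le_trans (hFmax p hp) (by omega), Or.inr ?_⟩
        refine ⟨rfl, ?_, ?_, ?_, ?_, ?_⟩
        · rw [show 2 * (n : ℤ) - (2 * (n : ℤ) - b) = b by ring]; exact hmemS
        · rw [show 2 * (n : ℤ) - (2 * (n : ℤ) - b) - 1 = b - 1 by ring]
          intro hmem
          obtain ⟨p, hp, hp2⟩ := mem_seconds' hmem
          have := hSmin p hp; omega
        · intro h; omega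
        · intro _; left
          intro hmem
          obtain ⟨p, hp, hp2⟩ := mem_seconds' hmem
          have := hSmin p hp; omega
        · intro h
          exact ⟨(a, b), rfl, Or.inl h.symm⟩
    · -- a = i = b : take l = a
      refine ⟨a, ha1, hin, hFmax,
        coreCD (Or.inl hmemF) (fun h => absurd h (lt_irrefl a)) (fun h => absurd h (lt_irrefl a))
          (fun _ => ?_)⟩
      have hab : a = b := hbi
      subst hab
      rfl

private lemma foldr_min_le_init (a : ℤ) (l : List ℤ) : l.foldr min a ≤ a := by
  induction l with
  | nil => simp
  | cons b l ih => exact le_trans (min_le_right _ _) ih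

private lemma foldr_min_le_mem {a x : ℤ} {l : List ℤ} (h : x ∈ l) : l.foldr min a ≤ x := by
  induction l with
  | nil => simp at h
  | cons b l ih =>
    rcases List.mem_cons.mp h with rfl | h
    · exact min_le_left _ _
    · exact le_trans (min_le_right _ _) (ih h)

private lemma foldr_min_mem (a : ℤ) (l : List ℤ) : l.foldr min a = a ∨ l.foldr min a ∈ l := by
  induction l with
  | nil => exact Or.inl rfl
  | cons b l ih =>
    have hc : List.foldr min a (b :: l) = min b (l.foldr min a) := rfl
    rcases min_choice b (l.foldr min a) with h | h
    · exact Or.inr (by rw [hc, h]; exact List.mem_cons_self)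
    · rcases ih with h' | h'
      · exact Or.inl (by rw [hc, h, h'])
      · exact Or.inr (by rw [hc, h]; exact List.mem_cons_of_mem _ h')

private lemma dstat_one (t : Bool) (n : ℕ) (l : ℤ) (c : RSeq) : dstat t n l c 1 = 0 := by
  have h1 : sigmaStat t n l c 1 = 0 := by simp [sigmaStat]
  have h2 : tauStat t n l c 1 = 0 := by
    have h : (c.take 1).drop 1 = [] := by cases c <;> simp
    simp [tauStat, h]
  simp [dstat, h1, h2]

private lemma minStat_le (t : Bool) (n : ℕ) (l : ℤ) (c : RSeq) {p : ℕ}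
    (h1 : 1 ≤ p) (h2 : p ≤ c.length) :
    minStat t n l c ≤ dstat t n l c p := by
  have hm : dstat t n l c p ∈ (List.range c.length).map (fun j => dstat t n l c (j + 1)) :=
    List.mem_map.mpr ⟨p - 1, List.mem_range.mpr (by omega), by congr 1; omega⟩
  exact foldr_min_le_mem hm

private lemma minStat_nonpos (t : Bool) (n : ℕ) (l : ℤ) (c : RSeq) : minStat t n l c ≤ 0 :=
  le_trans (foldr_min_le_init _ _) (le_of_eq (dstat_one t n l c))

private lemma condD'_imp {t : Bool} {n : ℕ} {i l : ℤ} {L : List (ℤ × ℤ)}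
    (h : condD' t n i l L) : condD t n i l L :=
  ⟨h.1, h.2.1, h.2.2.1, fun hh => Or.inl (h.2.2.2.1 hh).1, fun hh => Or.inl (h.2.2.2.2.1 hh).1,
    fun hh => (h.2.2.2.2.2 hh).imp fun p hp => ⟨hp.1, Or.inl hp.2.1⟩⟩

private lemma rho_ne_none {t : Bool} {n : ℕ} {i l : ℤ} {L : List (ℤ × ℤ)}
    (h : condC t n i l L ∨ condD t n i l L) : rho t n i l L ≠ none := by
  unfold rho
  split_ifs with h1 h2
  · simp
  · simp
  · tauto

private lemma etil_ne_none_of_neg {t : Bool} {n : ℕ} {l : ℤ} {c : RSeq}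
    (hmin : minStat t n l c < 0) : etil t n l c ≠ none := by
  have h10 : dstat t n l c 1 = 0 := dstat_one t n l c
  have hmem : minStat t n l c ∈ (List.range c.length).map (fun j => dstat t n l c (j + 1)) := by
    rcases foldr_min_mem (dstat t n l c 1)
      ((List.range c.length).map fun j => dstat t n l c (j + 1)) with h | h
    · exfalso
      have he : minStat t n l c = dstat t n l c 1 := h
      omega
    · exact h
  obtain ⟨j, hj, hjd⟩ := List.mem_map.mp hmem
  have hjr := List.mem_range.mp hj
  set S : Set ℕ := {p : ℕ | 1 ≤ p ∧ p ≤ c.length ∧ dstat t n l c p = minStat t n l c} with hS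
  have hSne : S.Nonempty := ⟨j + 1, ⟨by omega, by omega, hjd⟩⟩
  have heS : sInf S ∈ S := Nat.sInf_mem hSne
  set e := sInf S with he
  obtain ⟨he1, helen, hed⟩ := heS
  have hene : e ≠ 1 := by intro h; rw [h, h10] at hed; omega
  have he2 : 2 ≤ e := by omega
  have hd_not : e - 1 ∉ S := Nat.notMem_of_lt_sInf (by omega)
  have hdlt : dstat t n l c e < dstat t n l c (e - 1) := by
    have hle := minStat_le t n l c (p := e - 1) (by omega) (by omega)
    have hne : dstat t n l c (e - 1) ≠ minStat t n l c := fun h => hd_not ⟨by omega, by omega, h⟩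
    omega
  set d := e - 1 with hdd
  have hed1 : e = d + 1 := by omega
  have hdlen : d < c.length := by omega
  obtain ⟨y, hy⟩ : ∃ y, (c)[d]? = some y := ⟨_, List.getElem?_eq_getElem hdlen⟩
  have hy' : (c)[d]? = some y := by exact hy
  have hsig : sigmaStat t n l c d ≤ sigmaStat t n l c e := by
    have hsub : (c.take (d - 1)).Sublist (c.take d) := by
      have h' : c.take (d - 1) = (c.take d).take (d - 1) := by
        rw [List.take_take]; congr 1; omega
      rw [h']; exact List.take_sublist _ _
    unfold sigmaStat
    rw [hed1]
    simp only [Nat.add_sub_cancel]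
    exact Nat.add_le_add (List.Sublist.countP_le hsub) (List.Sublist.countP_le hsub)
  have htake : c.take e = c.take d ++ [y] := by
    rw [hed1, List.take_succ, hy']
    rfl
  have hdrop : (c.take e).drop 1 = (c.take d).drop 1 ++ [y] := by
    rw [htake, List.drop_append]
    congr 1
    have hl1 : (c.take d).length = d := by rw [List.length_take]; omega
    rw [hl1, show 1 - d = 0 by omega]
    rfl
  have htau : tauStat t n l c e = tauStat t n l c d
      + (List.countP (fun q => decide (condC t n q.1 l q.2 ∨ condD t n q.1 l q.2)) [y])
      + (List.countP (fun q => decide (condD' t n q.1 l q.2)) [y]) := by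
    unfold tauStat
    rw [hdrop, List.countP_append, List.countP_append]
    omega
  have hCD : condC t n y.1 l y.2 ∨ condD t n y.1 l y.2 := by
    have hpos : 0 < List.countP (fun q => decide (condC t n q.1 l q.2 ∨ condD t n q.1 l q.2)) [y]
        ∨ 0 < List.countP (fun q => decide (condD' t n q.1 l q.2)) [y] := by
      by_contra hcon
      push_neg at hcon
      unfold dstat at hdlt
      omega
    rcases hpos with hp | hp
    · obtain ⟨z, hz, hz'⟩ := List.countP_pos_iff.mp hp
      have : z = y := List.mem_singleton.mp hz
      subst this
      exact of_decide_eq_true hz'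
    · obtain ⟨z, hz, hz'⟩ := List.countP_pos_iff.mp hp
      have : z = y := List.mem_singleton.mp hz
      subst this
      exact Or.inr (condD'_imp (of_decide_eq_true hz'))
  intro hnone
  unfold etil at hnone
  have hepos : epos t n l c = e := rfl
  rw [hepos, show e - 1 = d from rfl, hy, Option.bind_some] at hnone
  exact rho_ne_none hCD (Option.map_eq_none_iff.mp hnone)

private lemma etil_ne_none_head {t : Bool} {n : ℕ} {l : ℤ} {x : ℤ × List (ℤ × ℤ)} {c₂ : RSeq}
    (hmin : minStat t n l (x :: c₂) = 0)
    (hCD : condC t n x.1 l x.2 ∨ condD t n x.1 l x.2) :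
    etil t n l (x :: c₂) ≠ none := by
  set c : RSeq := x :: c₂ with hc
  set S : Set ℕ := {p : ℕ | 1 ≤ p ∧ p ≤ c.length ∧ dstat t n l c p = minStat t n l c} with hS
  have h1S : 1 ∈ S := ⟨le_refl 1, by simp [hc], by rw [dstat_one, hmin]⟩
  have he : epos t n l c = 1 := by
    have h1 : sInf S ≤ 1 := Nat.sInf_le h1S
    have h2 : sInf S ∈ S := Nat.sInf_mem ⟨1, h1S⟩
    have h3 : 1 ≤ sInf S := h2.1
    have h4 : epos t n l c = sInf S := rfl
    omega
  intro hnone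
  unfold etil at hnone
  rw [he] at hnone
  have hget : (c)[0]? = some x := rfl
  rw [show (1 : ℕ) - 1 = 0 from rfl, hget, Option.bind_some] at hnone
  exact rho_ne_none hCD (Option.map_eq_none_iff.mp hnone)

private lemma typeList_le {k : ℕ} {m : ℤ → ℕ} : ∀ v ∈ typeList k m, v ≤ (k : ℤ) := by
  intro v hv
  unfold typeList at hv
  obtain ⟨a, ha, hv⟩ := List.mem_flatMap.mp hv
  obtain ⟨-, rfl⟩ := List.mem_replicate.mp hv
  obtain ⟨b, hb, rfl⟩ : ∃ b, b < k ∧ a = (b : ℤ) := by simpa using ha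
  omega

private lemma typeList_pairwise (k : ℕ) (m : ℤ → ℕ) :
    List.Pairwise (· ≤ ·) (typeList k m) := by
  induction k with
  | zero => simp [typeList]
  | succ k ih =>
    rw [show typeList (k + 1) m = typeList k m ++ List.replicate (m ((k : ℤ) + 1)) ((k : ℤ) + 1) by
      unfold typeList; simp [List.range_succ]]
    refine List.pairwise_append.mpr ⟨ih, ?_, ?_⟩
    · exact List.pairwise_replicate.mpr (Or.inr (le_refl _))
    · intro a ha b hb
      have ha' := typeList_le a ha
      simp only [List.flatMap_cons, List.flatMap_nil, List.append_nil,
        List.mem_replicate] at hb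
      omega

private lemma mem_takeWhile_empty {c : RSeq} {y : ℤ × List (ℤ × ℤ)}
    (h : y ∈ c.takeWhile (fun q => q.2.isEmpty)) : y.2 = [] :=
  List.isEmpty_iff.mp
    (List.mem_takeWhile_imp (p := fun q : ℤ × List (ℤ × ℤ) => q.2.isEmpty) h)

private lemma head_dropWhile {α : Type*} (p : α → Bool) :
    ∀ (l : List α) (x : α) (xs : List α), l.dropWhile p = x :: xs → p x = false := by
  intro l
  induction l with
  | nil => intro x xs h; simp [List.dropWhile] at h
  | cons a l ih =>
    intro x xs h
    rw [List.dropWhile_cons] at h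
    split_ifs at h with hpa
    · exact ih x xs h
    · cases h
      simpa using hpa

end CrystalSeq

open CrystalSeq in
/-- uniqueness of the highest weight element in type `C`: if
`x = (x₁, …, x_k, 0, …) ∈ 𝓡(λ)` (characterised by conditions (1)–(4) of
Theorem `char2`) satisfies `ẽ_l x = 0` for all `l ∈ I`, then `x = r_λ`. -/
theorem statement19 (n : ℕ) (hn : 1 ≤ n) (m : ℤ → ℕ) (c : RSeq)
    (h : MemC n m c)
    (hw : ∀ l : ℤ, 1 ≤ l → l ≤ (n : ℤ) → etil true n l c = none) :
    c = rlam n m := by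
  obtain ⟨hmap, hval, hchain⟩ := h
  by_cases hall : ∀ q ∈ c, q.2 = ([] : List (ℤ × ℤ))
  · have h1 : rlam n m = c.map (fun q => (q.1, ([] : List (ℤ × ℤ)))) := by
      unfold rlam
      rw [← hmap, List.map_map]
      rfl
    have h2 : c.map (fun q => (q.1, ([] : List (ℤ × ℤ)))) = c := by
      conv_rhs => rw [← List.map_id c]
      exact List.map_congr_left fun a ha => by rw [← hall a ha]; rfl
    rw [h1, h2]
  · push_neg at hall
    exfalso
    obtain ⟨x0, hx0c, hx0⟩ := hall
    obtain ⟨x, c₂, hxc₂⟩ : ∃ x c₂,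
        c.dropWhile (fun q => q.2.isEmpty) = x :: c₂ := by
      cases hrest : c.dropWhile (fun q => q.2.isEmpty) with
      | nil =>
        exfalso
        have hcc : c.takeWhile (fun q => q.2.isEmpty) = c := by
          have := List.takeWhile_append_dropWhile (p := fun q : ℤ × List (ℤ × ℤ) => q.2.isEmpty) (l := c)
          rw [hrest, List.append_nil] at this
          exact this
        rw [← hcc] at hx0c
        exact hx0 (mem_takeWhile_empty hx0c)
      | cons x c₂ => exact ⟨x, c₂, rfl⟩
    set c₁ := c.takeWhile (fun q : ℤ × List (ℤ × ℤ) => q.2.isEmpty) with hc₁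
    have hsplit : c₁ ++ (x :: c₂) = c := by
      rw [← hxc₂]
      exact List.takeWhile_append_dropWhile
    have hx2 : x.2 ≠ [] := by
      have hfalse : x.2.isEmpty = false :=
        head_dropWhile (fun q : ℤ × List (ℤ × ℤ) => q.2.isEmpty) c x c₂ hxc₂
      intro h
      rw [h] at hfalse
      simp at hfalse
    have hxmem : x ∈ c := by
      rw [← hsplit]; exact List.mem_append_right _ List.mem_cons_self
    obtain ⟨hx1, hxn, hxR⟩ := hval x hxmem
    obtain ⟨l, hl1, hln, hlmax, hCD⟩ := keyLemma hxn hxR hx2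
    by_cases hc1nil : c₁ = []
    · -- the non-empty component is the first one
      have hc' : c = x :: c₂ := by rw [← hsplit, hc1nil, List.nil_append]
      rcases lt_or_eq_of_le (minStat_nonpos true n l c) with hlt | heq
      · exact etil_ne_none_of_neg hlt (hw l hl1 hln)
      · rw [hc'] at heq
        exact etil_ne_none_head heq hCD (by rw [← hc']; exact hw l hl1 hln)
    · -- there are components before it; they are all empty with superscripts < l
      obtain ⟨c₁', w, hw'⟩ := (List.eq_nil_or_concat c₁).resolve_left hc1nil
      rw [List.concat_eq_append] at hw'
      have hwmem : w ∈ c₁ := by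
        rw [hw']; exact List.mem_append_right _ (List.mem_singleton.mpr rfl)
      have hw2 : w.2 = [] := mem_takeWhile_empty (by rw [← hc₁]; exact hwmem)
      have hchain2 : List.Chain' (fun a b => pairOkC n a.1 a.2 b.1 b.2) (c₁ ++ x :: c₂) := by
        rw [hsplit]; exact hchain
      have hpair : pairOkC n w.1 w.2 x.1 x.2 := by
        have h3 := (List.isChain_append.mp hchain2).2.2
        refine h3 w ?_ x ?_
        · rw [hw']
          exact List.getLast?_concat
        · rfl
      have hg : x.2.getLast? = some (x.2.getLast hx2) := List.getLast?_eq_getLast hx2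
      have hwl : w.1 < l := by
        have h1 := hpair.1.2 hw2 _ hg
        have h2 := hlmax _ (List.getLast_mem hx2)
        omega
      have hfstlt : ∀ y ∈ c₁, y.1 < l := by
        intro y hy
        rw [hw'] at hy
        rcases List.mem_append.mp hy with hy | hy
        · have hsorted : List.Pairwise (· ≤ ·) (c.map Prod.fst) := by
            rw [hmap]; exact typeList_pairwise n m
          have hc'' : c = c₁' ++ (w :: x :: c₂) := by
            rw [← hsplit, hw', List.append_assoc]; rfl
          rw [hc'', List.map_append] at hsorted
          have h4 := (List.pairwise_append.mp hsorted).2.2 y.1 (List.mem_map_of_mem hy)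
            w.1 (by simp)
          omega
        · have : y = w := List.mem_singleton.mp hy
          rw [this]; exact hwl
      set q0 := c₁.length with hq0
      have hq01 : 1 ≤ q0 := by
        rw [hq0, hw', List.length_append]; simp
      have htakeq0 : c.take q0 = c₁ := by
        rw [← hsplit]; exact List.take_left
      have hempty : ∀ y ∈ c₁, y.2 = ([] : List (ℤ × ℤ)) := by
        intro y hy
        exact mem_takeWhile_empty (by rw [← hc₁]; exact hy)
      have hsigma : sigmaStat true n l c (q0 + 1) = 0 := by
        unfold sigmaStat
        simp only [Nat.add_sub_cancel]
        rw [htakeq0]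
        have e1 : List.countP
            (fun q => decide (condA true n q.1 l q.2 ∨ condB true n q.1 l q.2)) c₁ = 0 := by
          refine List.countP_eq_zero.mpr ?_
          intro y hy
          simp only [decide_eq_true_eq]
          intro hcon
          have hy2 := hempty y hy
          have hylt := hfstlt y hy
          rcases hcon with hA | hB
          · have := hA.2.2.2.1 (by omega : y.1 < l)
            rw [hy2] at this
            simp [seconds] at this
          · have := hB.2.2.1
            rw [hy2] at this
            simp [seconds] at this
        have e2 : List.countP (fun q => decide (condA' true n q.1 l q.2)) c₁ = 0 := by
          refine List.countP_eq_zero.mpr ?_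
          intro y hy
          simp only [decide_eq_true_eq]
          intro hcon
          have hy2 := hempty y hy
          have := hcon.2.2.2.2.2.1
          rw [hy2] at this
          simp [seconds] at this
        rw [e1, e2]
      have htau1 : 0 < tauStat true n l c (q0 + 1) := by
        unfold tauStat
        have htake : c.take (q0 + 1) = c₁ ++ [x] := by
          rw [← hsplit, List.take_append,
            List.take_of_length_le (by omega : c₁.length ≤ q0 + 1)]
          congr 1
          rw [show q0 + 1 - c₁.length = 1 by omega]
          rfl
        have hxmem' : x ∈ (c.take (q0 + 1)).drop 1 := by
          rw [htake, List.drop_append,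
            show 1 - c₁.length = 0 by omega]
          exact List.mem_append_right _ (List.mem_singleton.mpr rfl)
        have hpos : 0 < List.countP
            (fun q => decide (condC true n q.1 l q.2 ∨ condD true n q.1 l q.2))
            ((c.take (q0 + 1)).drop 1) :=
          List.countP_pos_iff.mpr ⟨x, hxmem', by simpa using hCD⟩
        omega
      have hminlt : minStat true n l c < 0 := by
        have hlen : q0 + 1 ≤ c.length := by
          rw [← hsplit, List.length_append]; simp; omega
        have hle := minStat_le true n l c (p := q0 + 1) (by omega) hlen
        have hd : dstat true n l c (q0 + 1) < 0 := by
          unfold dstat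
          rw [hsigma]
          omega
        omega
      exact etil_ne_none_of_neg hminlt (hw l hl1 hln)
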